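/- Let p be a prime element of 𝒪 with p ≡ 1 (mod 3), let w, B, b ∈ 𝒪 with wBb coprime to p, and let j, k be integers with either 1 ≤ j < k or 1 < j = k. Then ∑_{A (p^k)*} (A/p^k)₃ · e(b·(wA)⁻¹/p^k) · ∑_{x (p^k)} e((A w² x³ + p^j B x)/p^k) = 0. -/

import Mathlib

noncomputable section

namespace CubicSeries

open scoped Classical
set_option maxHeartbeats 1000000
set_option synthInstance.maxHeartbeats 400000

def ω : ℂ := Complex.exp (2 * Real.pi * Complex.I / 3)

def O : Subring ℂ := Subring.closure {ω}

abbrev OK : Type _ := O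

def δ : ℂ := ω - ω ^ 2

def eC (z : ℂ) : ℂ :=
  Complex.exp (2 * Real.pi * Complex.I * (z / δ + (starRingEnd ℂ) (z / δ)))

def rep {I : Ideal OK} (x : OK ⧸ I) : OK :=
  Function.surjInv Ideal.Quotient.mk_surjective x

/-- `N(c) = |𝒪/(c)|`, the absolute norm. -/
def Nm (c : OK) : ℕ := Nat.card (OK ⧸ Ideal.span {c})

/-- `φ(c) = |(𝒪/(c))ˣ|`. -/
def totient (c : OK) : ℕ := Nat.card ((OK ⧸ Ideal.span {c})ˣ)

/-- a multiplicative inverse modulo `c` (an arbitrary element when `x` is not invertible). -/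
def invMod (c x : OK) : OK :=
  rep (Ring.inverse (Ideal.Quotient.mk (Ideal.span {c}) x))

def T (A B c : OK) : ℂ :=
  ∑ᶠ x : OK ⧸ Ideal.span {c}, eC (((A * rep x ^ 3 + B * rep x : OK) : ℂ) / (c : ℂ))

/-- The cubic residue symbol `(x/π)₃` for a prime element `π` not dividing `3`:
the unique cube root of unity congruent to `x^{(N(π)-1)/3}` mod `π`, and `0` if `π ∣ x`. -/
def cubicCharP (π x : OK) : OK :=
  if h : ∃ ζ : OK, ζ ^ 3 = 1 ∧ π ∣ ζ - x ^ ((Nm π - 1) / 3) ∧ ¬ π ∣ x then h.choose else 0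

/-- The cubic residue symbol `(x/c)₃` for `c` coprime to `3`, defined via a factorization of
`c` into a unit times prime elements (with multiplicity). -/
def cubicChar (c x : OK) : OK :=
  if h : ∃ fs : OKˣ × Multiset OK, (∀ π ∈ fs.2, Prime π) ∧ c = (fs.1 : OK) * fs.2.prod
  then (h.choose.2.map fun π => cubicCharP π x).prod
  else 0

/-- The cubic Gauss sum `g(a,c) = ∑_{x (c)*} (x/c)₃ e(ax/c)`. -/
def gaussSum (a c : OK) : ℂ :=
  ∑ᶠ u : (OK ⧸ Ideal.span {c})ˣ,
    ((cubicChar c (rep u.val) : OK) : ℂ) * eC (((a * rep u.val : OK) : ℂ) / (c : ℂ))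

/-- The Möbius function: `μ(c) = (−1)^r` if `(c)` is a product of `r` distinct prime ideals,
and `μ(c) = 0` otherwise. -/
def moebius (c : OK) : ℤ :=
  if h : ∃ s : Finset (Ideal OK), (∀ P ∈ s, Prime P) ∧ Ideal.span {c} = ∏ P ∈ s, P
  then (-1) ^ h.choose.card
  else 0

/-- `p^n` modulo `c`, where a negative exponent means the inverse of `p^{-n}` mod `c`. -/
def ppow (c p : OK) (n : ℤ) : OK :=
  if 0 ≤ n then p ^ n.toNat else invMod c (p ^ (-n).toNat)

/-- A choice of generator of a (principal) ideal. -/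
def gen (J : Ideal OK) : OK := if h : ∃ q : OK, Ideal.span {q} = J then h.choose else 0

/-- A choice of cofactor: `cofactor c q` is a `d` with `c = q·d`, when one exists. -/
def cofactor (c q : OK) : OK := if h : ∃ d : OK, c = q * d then h.choose else 0


lemma omega_pow_three : ω ^ 3 = 1 := by
  rw [ω, ← Complex.exp_nat_mul]
  rw [show ((3:ℕ):ℂ) * (2 * Real.pi * Complex.I / 3) = 2 * Real.pi * Complex.I by push_cast; ring]
  exact Complex.exp_two_pi_mul_I

lemma omega_def' : ω = Complex.exp ((2 * Real.pi / 3 : ℝ) * Complex.I) := by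
  rw [ω]; push_cast; ring_nf

lemma omega_im : ω.im = Real.sqrt 3 / 2 := by
  rw [omega_def', Complex.exp_ofReal_mul_I_im,
    show 2 * Real.pi / 3 = Real.pi - Real.pi / 3 by ring, Real.sin_pi_sub,
    Real.sin_pi_div_three]

lemma omega_im_pos : 0 < ω.im := by rw [omega_im]; positivity

lemma omega_ne_one : ω ≠ 1 := by
  intro h
  have := omega_im_pos
  rw [h] at this
  simp at this

lemma omega_sq : ω ^ 2 + ω + 1 = 0 := by
  have h3 := omega_pow_three
  have h : (ω - 1) * (ω ^ 2 + ω + 1) = 0 := by linear_combination h3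
  rcases mul_eq_zero.1 h with h | h
  · exact absurd (sub_eq_zero.1 h) omega_ne_one
  · exact h

lemma omega_re : ω.re = -(1/2) := by
  rw [omega_def', Complex.exp_ofReal_mul_I_re,
    show 2 * Real.pi / 3 = Real.pi - Real.pi / 3 by ring, Real.cos_pi_sub,
    Real.cos_pi_div_three]

lemma omega_sq_eq : ω ^ 2 = -1 - ω := by linear_combination omega_sq

lemma delta_eq : δ = (Real.sqrt 3 : ℝ) * Complex.I := by
  rw [δ, omega_sq_eq]
  apply Complex.ext <;> simp [omega_re, omega_im] <;> ring

lemma sqrt3_pos : (0:ℝ) < Real.sqrt 3 := by positivity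

lemma delta_ne_zero : δ ≠ 0 := by
  rw [delta_eq]
  simp [Complex.ext_iff, Real.sqrt_eq_zero', sqrt3_pos.ne']

lemma trace_eq (z : ℂ) : z / δ + (starRingEnd ℂ) (z / δ) = ((2 * z.im / Real.sqrt 3 : ℝ) : ℂ) := by
  rw [Complex.add_conj, delta_eq]
  have h : (z / ((Real.sqrt 3 : ℝ) * Complex.I)).re = z.im / Real.sqrt 3 := by
    rw [Complex.div_re]
    simp [Complex.normSq_mul, Complex.normSq_I]
    rw [div_eq_div_iff (by norm_num) sqrt3_pos.ne', mul_assoc,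
      Real.mul_self_sqrt (by norm_num)]
  rw [h]
  push_cast
  ring

lemma eC_eq (z : ℂ) : eC z = Complex.exp (2 * Real.pi * Complex.I * ((2 * z.im / Real.sqrt 3 : ℝ) : ℂ)) := by
  rw [eC, trace_eq]

lemma eC_add (z w : ℂ) : eC (z + w) = eC z * eC w := by
  rw [eC_eq, eC_eq, eC_eq, ← Complex.exp_add]
  congr 1
  push_cast
  simp [Complex.add_im]
  ring

lemma eC_int (a b : ℤ) : eC ((a : ℂ) + (b:ℂ) * ω) = 1 := by
  rw [eC_eq]
  have him : ((a : ℂ) + (b:ℂ) * ω).im = b * (Real.sqrt 3 / 2) := by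
    simp [omega_im]
  rw [him]
  have : (2 * ((b:ℝ) * (Real.sqrt 3 / 2)) / Real.sqrt 3 : ℝ) = (b:ℝ) := by
    field_simp
  rw [this]
  rw [show 2 * ↑Real.pi * Complex.I * ((b:ℝ):ℂ) = (b:ℤ) * (2 * ↑Real.pi * Complex.I) by push_cast; ring]
  exact Complex.exp_int_mul_two_pi_mul_I b

lemma omega_mem : ω ∈ O := Subring.subset_closure rfl

lemma coords (x : OK) : ∃ a b : ℤ, (x:ℂ) = (a:ℂ) + (b:ℂ) * ω := by
  obtain ⟨x, hx⟩ := x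
  induction hx using Subring.closure_induction with
  | mem y hy => exact ⟨0, 1, by simp [Set.mem_singleton_iff.1 hy]⟩
  | zero => exact ⟨0, 0, by simp⟩
  | one => exact ⟨1, 0, by simp⟩
  | add y z _ _ hy hz =>
      obtain ⟨a, b, hy⟩ := hy; obtain ⟨c, d, hz⟩ := hz
      have hy' : y = (a:ℂ) + (b:ℂ) * ω := hy
      have hz' : z = (c:ℂ) + (d:ℂ) * ω := hz
      exact ⟨a + c, b + d, by show y + z = _; push_cast [hy', hz']; ring⟩
  | neg y _ hy =>
      obtain ⟨a, b, hy⟩ := hy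
      have hy' : y = (a:ℂ) + (b:ℂ) * ω := hy
      exact ⟨-a, -b, by show -y = _; push_cast [hy']; ring⟩
  | mul y z _ _ hy hz =>
      obtain ⟨a, b, hy⟩ := hy; obtain ⟨c, d, hz⟩ := hz
      have hy' : y = (a:ℂ) + (b:ℂ) * ω := hy
      have hz' : z = (c:ℂ) + (d:ℂ) * ω := hz
      refine ⟨a * c - b * d, a * d + b * c - b * d, ?_⟩
      show y * z = _
      push_cast [hy', hz']
      linear_combination ((b:ℂ) * d) * omega_sq_eq

lemma eC_OK (x : OK) : eC (x : ℂ) = 1 := by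
  obtain ⟨a, b, h⟩ := coords x
  rw [h]; exact eC_int a b


def ωO : OK := ⟨ω, omega_mem⟩
lemma coe_omegaO : ((ωO:OK):ℂ) = ω := rfl

lemma coordsO (x : OK) : ∃ a b : ℤ, x = (a : OK) + (b : OK) * ωO := by
  obtain ⟨a, b, h⟩ := coords x
  exact ⟨a, b, Subtype.ext (by push_cast [ωO]; exact h)⟩

lemma coe_inj {x y : OK} (h : (x:ℂ) = (y:ℂ)) : x = y := Subtype.ext h

lemma mk_rep {I : Ideal OK} (x : OK ⧸ I) :
    Ideal.Quotient.mk I (rep x) = x :=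
  Function.surjInv_eq _ x

lemma finiteQuot (c : OK) (hc : c ≠ 0) : Finite (OK ⧸ Ideal.span {c}) := by
  obtain ⟨a, b, hab⟩ := coords c
  have hcbar : ((a^2 - a*b + b^2 : ℤ) : OK) = c * (((a - b : ℤ) : OK) - ((b:ℤ):OK) * ωO) := by
    apply coe_inj
    push_cast [ωO, hab]
    linear_combination ((b:ℂ)^2) * omega_sq_eq
  set n : ℤ := a^2 - a*b + b^2 with hn
  have hn0 : n ≠ 0 := by
    intro h0
    have hb : b = 0 := by nlinarith [sq_nonneg (2*a - b), sq_nonneg b]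
    have ha : a = 0 := by nlinarith
    apply hc
    apply coe_inj
    rw [hab, ha, hb]
    push_cast; ring
  set m : ℕ := n.natAbs with hm
  have hm0 : 0 < m := Int.natAbs_pos.2 hn0
  have hnmem : ((n:ℤ):OK) ∈ Ideal.span {c} :=
    Ideal.mem_span_singleton'.2 ⟨_, by rw [mul_comm]; exact hcbar.symm⟩
  have hmmem : (((m:ℕ):ℤ):OK) ∈ Ideal.span {c} := by
    rcases Int.natAbs_eq n with h | h
    · rw [← h]; exact hnmem
    · have hz : ((m:ℕ):ℤ) = -n := by rw [hm]; omega
      have : (((m:ℕ):ℤ):OK) = -((n:ℤ):OK) := by rw [hz]; push_cast; ring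
      rw [this]; exact neg_mem hnmem
  refine Finite.of_surjective
    (fun ij : Fin m × Fin m =>
      Ideal.Quotient.mk (Ideal.span {c}) (((ij.1.val:ℤ):OK) + ((ij.2.val:ℤ):OK) * ωO)) ?_
  intro q
  obtain ⟨x, rfl⟩ := Ideal.Quotient.mk_surjective q
  obtain ⟨a', b', hx⟩ := coordsO x
  have hmZ : (0:ℤ) < (m:ℤ) := by exact_mod_cast hm0
  refine ⟨(⟨(a' % m).toNat, ?_⟩, ⟨(b' % m).toNat, ?_⟩), ?_⟩
  · have := Int.emod_lt_of_pos a' hmZ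
    have h0 := Int.emod_nonneg a' hmZ.ne'
    omega
  · have := Int.emod_lt_of_pos b' hmZ
    have h0 := Int.emod_nonneg b' hmZ.ne'
    omega
  · rw [Ideal.Quotient.eq]
    have h1 : (((a' % m).toNat : ℤ)) = a' % m := Int.toNat_of_nonneg (Int.emod_nonneg a' hmZ.ne')
    have h2 : (((b' % m).toNat : ℤ)) = b' % m := Int.toNat_of_nonneg (Int.emod_nonneg b' hmZ.ne')
    have key : (((a' % m).toNat:ℤ):OK) + (((b' % m).toNat:ℤ):OK) * ωO - x
        = (((m:ℕ):ℤ):OK) * (((-(a'/m) : ℤ):OK) + ((-(b'/m) : ℤ):OK) * ωO) := by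
      rw [hx]
      apply coe_inj
      push_cast [h1, h2]
      rw [Int.emod_def, Int.emod_def]
      push_cast
      ring
    rw [key]
    exact Ideal.mul_mem_right _ _ hmmem


lemma coe_ne_zero {c : OK} (hc : c ≠ 0) : (c:ℂ) ≠ 0 := by
  intro h; exact hc (coe_inj (by simpa using h))

lemma eC_zero : eC 0 = 1 := by simp [eC]

lemma rep_sub_mem {I : Ideal OK} (x : OK) :
    rep (Ideal.Quotient.mk I x) - x ∈ I :=
  Ideal.Quotient.eq.1 (mk_rep _)

lemma eC_congr {c : OK} (hc : c ≠ 0) {x y : OK} (h : c ∣ x - y) :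
    eC ((x:ℂ)/(c:ℂ)) = eC ((y:ℂ)/(c:ℂ)) := by
  obtain ⟨d, hd⟩ := h
  have hd' : (x:ℂ) = (y:ℂ) + (c:ℂ)*(d:ℂ) := by
    have h2 := congrArg (fun z : OK => (z:ℂ)) hd
    push_cast at h2
    linear_combination h2
  rw [hd', show ((y:ℂ) + (c:ℂ)*(d:ℂ))/(c:ℂ) = (y:ℂ)/(c:ℂ) + (d:ℂ) from by
    field_simp [coe_ne_zero hc], eC_add, eC_OK, mul_one]

lemma eC_dvd_eq_one {c : OK} (hc : c ≠ 0) {x : OK} (h : c ∣ x) :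
    eC ((x:ℂ)/(c:ℂ)) = 1 := by
  have := eC_congr hc (x := x) (y := 0) (by simpa using h)
  simpa [eC_zero] using this

/-- nondegeneracy of the pairing -/
lemma dvd_of_eC_all {p c : OK} (hp : p ≠ 0) (h : ∀ s : OK, eC ((c:ℂ) * (s:ℂ) / (p:ℂ)) = 1) :
    p ∣ c := by
  have hpC := coe_ne_zero hp
  set z : ℂ := (c:ℂ) / (p:ℂ) with hz
  have key : ∀ s : OK, ∃ n : ℤ, 2 * (z * (s:ℂ)).im / Real.sqrt 3 = (n:ℝ) := by
    intro s
    have h1 := h s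
    rw [show (c:ℂ) * (s:ℂ) / (p:ℂ) = z * (s:ℂ) from by rw [hz]; ring] at h1
    rw [eC_eq] at h1
    rw [Complex.exp_eq_one_iff] at h1
    obtain ⟨n, hn⟩ := h1
    refine ⟨n, ?_⟩
    have hI : (2:ℂ) * Real.pi * Complex.I ≠ 0 := by
      simp [Real.pi_ne_zero, Complex.I_ne_zero]
    have h2 : (2 * (Real.pi:ℂ) * Complex.I) * ((2 * (z * (s:ℂ)).im / Real.sqrt 3 : ℝ):ℂ)
        = (2 * (Real.pi:ℂ) * Complex.I) * ((n:ℤ):ℂ) := hn.trans (by ring)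
    have h3 := mul_left_cancel₀ hI h2
    exact_mod_cast h3
  obtain ⟨m, hm⟩ := key 1
  obtain ⟨n, hn⟩ := key ωO
  have hωO : ((ωO : OK) : ℂ) = ω := rfl
  rw [hωO] at hn
  simp only [OneMemClass.coe_one, mul_one] at hm
  have him : z.im = (m:ℝ) * Real.sqrt 3 / 2 := by
    rw [div_eq_iff sqrt3_pos.ne'] at hm
    linarith
  have hre : z.re = (n:ℝ) + (m:ℝ)/2 := by
    have h2 : (z * ω).im = z.re * ω.im + z.im * ω.re := Complex.mul_im z ω
    rw [h2, omega_im, omega_re, him] at hn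
    rw [div_eq_iff sqrt3_pos.ne'] at hn
    have h3 : (z.re - ((n:ℝ) + (m:ℝ)/2)) * Real.sqrt 3 = 0 := by linear_combination hn
    rcases mul_eq_zero.1 h3 with h4 | h4
    · linarith
    · exact absurd h4 sqrt3_pos.ne'
  have hzd : z = (((n + m : ℤ):ℂ) + ((m:ℤ):ℂ) * ω) := by
    apply Complex.ext
    · rw [hre]; push_cast; simp [omega_re]; ring
    · rw [him]; push_cast; simp [omega_im]; ring
  refine ⟨((n + m : ℤ):OK) + ((m:ℤ):OK) * ωO, ?_⟩
  apply coe_inj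
  push_cast [ωO]
  push_cast at hzd
  rw [← hzd, hz]
  field_simp

-- new material
def E (c x : OK) : ℂ := eC ((x:ℂ)/(c:ℂ))

lemma E_add (c x y : OK) : E c (x + y) = E c x * E c y := by
  unfold E
  rw [← eC_add]
  congr 1
  push_cast
  ring

lemma E_congr {c : OK} (hc : c ≠ 0) {x y : OK} (h : c ∣ x - y) : E c x = E c y :=
  eC_congr hc h

lemma E_dvd {c : OK} (hc : c ≠ 0) {x : OK} (h : c ∣ x) : E c x = 1 := by
  have h0 : E c x = E c 0 := E_congr hc (by simpa using h)
  have h1 : E c 0 = 1 := by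
    have := eC_OK (0 : OK)
    unfold E
    simpa using this
  rw [h0, h1]

lemma E_shift {p : OK} (hp : p ≠ 0) (c : OK) (m : ℕ) :
    E (p^(m+2)) (c * p^(m+1)) = E p c := by
  unfold E
  congr 1
  have hpC := coe_ne_zero hp
  push_cast
  field_simp
  ring

lemma dvd_rep_sub (c x : OK) : c ∣ rep (Ideal.Quotient.mk (Ideal.span {c}) x) - x :=
  Ideal.mem_span_singleton.1 (rep_sub_mem x)

lemma dvd_of_mk_eq {c x y : OK}
    (h : Ideal.Quotient.mk (Ideal.span {c}) x = Ideal.Quotient.mk (Ideal.span {c}) y) :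
    c ∣ x - y := Ideal.mem_span_singleton.1 (Ideal.Quotient.eq.1 h)

lemma char_sum_zero {p : OK} (hp : p ≠ 0) [Fintype (OK ⧸ Ideal.span {p})] {c : OK}
    (hpc : ¬ p ∣ c) :
    ∑ q : OK ⧸ Ideal.span {p}, E p (c * rep q) = 0 := by
  let Q' := OK ⧸ Ideal.span {p}
  set f : Q' → ℂ := fun q => E p (c * rep q) with hf
  have hom : ∀ q q' : Q', f (q + q') = f q * f q' := by
    intro q q'
    have h1 : p ∣ c * rep (q + q') - c * (rep q + rep q') := by
      have : q + q' = Ideal.Quotient.mk (Ideal.span {p}) (rep q + rep q') := by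
        rw [map_add, mk_rep, mk_rep]
      obtain ⟨d, hd⟩ := dvd_of_mk_eq (c := p) (x := rep (q + q')) (y := rep q + rep q')
        (by rw [mk_rep, this])
      exact ⟨c * d, by linear_combination c * hd⟩
    calc f (q + q') = E p (c * (rep q + rep q')) := E_congr hp h1
      _ = E p (c * rep q + c * rep q') := by rw [mul_add]
      _ = E p (c * rep q) * E p (c * rep q') := E_add _ _ _
  obtain ⟨s₀, hs₀⟩ : ∃ s₀ : OK, E p (c * s₀) ≠ 1 := by
    by_contra hall
    push_neg at hall
    apply hpc
    apply dvd_of_eC_all hp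
    intro s
    have h2 : ((c * s : OK):ℂ) = (c:ℂ) * (s:ℂ) := by norm_cast
    rw [← h2]
    exact hall s
  set q₀ : Q' := Ideal.Quotient.mk (Ideal.span {p}) s₀ with hq₀
  have hfq₀ : f q₀ = E p (c * s₀) := by
    show E p (c * rep q₀) = E p (c * s₀)
    apply E_congr hp
    obtain ⟨d, hd⟩ := dvd_rep_sub p s₀
    exact ⟨c * d, by linear_combination c * hd⟩
  have hre : ∑ q : Q', f q = (∑ q : Q', f q) * f q₀ := by
    calc ∑ q : Q', f q = ∑ q : Q', f (q + q₀) :=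
          (Fintype.sum_equiv (Equiv.addRight q₀) _ _ (fun q => rfl)).symm
      _ = ∑ q : Q', f q * f q₀ := by simp only [hom]
      _ = (∑ q : Q', f q) * f q₀ := by rw [Finset.sum_mul]
  have : (∑ q : Q', f q) * (1 - f q₀) = 0 := by linear_combination hre
  rcases mul_eq_zero.1 this with h | h
  · exact h
  · exact absurd (by linear_combination -h : f q₀ = 1) (hfq₀ ▸ hs₀)

lemma char_sum_dvd {p : OK} (hp : p ≠ 0) [Fintype (OK ⧸ Ideal.span {p})] {c : OK}
    (hpc : p ∣ c) :
    ∑ q : OK ⧸ Ideal.span {p}, E p (c * rep q) = (Fintype.card (OK ⧸ Ideal.span {p}) : ℂ) := by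
  have : ∀ q : OK ⧸ Ideal.span {p}, E p (c * rep q) = 1 := fun q =>
    E_dvd hp (hpc.mul_right _)
  simp [this]

lemma cube_root_cases {ζ : OK} (h : ζ ^ 3 = 1) : ζ = 1 ∨ ζ = ωO ∨ ζ = ωO^2 := by
  have hz : ((ζ:ℂ))^3 = 1 := by
    have := congrArg (fun z : OK => (z:ℂ)) h
    push_cast at this
    exact this
  have key : ((ζ:ℂ) - 1) * ((ζ:ℂ) - ω) * ((ζ:ℂ) - ω^2) = 0 := by
    linear_combination hz + ((ζ:ℂ) - (ζ:ℂ)^2) * omega_sq_eq + ((ζ:ℂ) - 1) * omega_pow_three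
  rcases mul_eq_zero.1 key with h1 | h1
  · rcases mul_eq_zero.1 h1 with h2 | h2
    · exact Or.inl (coe_inj (by push_cast; linear_combination h2))
    · exact Or.inr (Or.inl (coe_inj (by rw [coe_omegaO]; linear_combination h2)))
  · refine Or.inr (Or.inr (coe_inj ?_))
    rw [show ((ωO^2 : OK):ℂ) = ω^2 from by push_cast [coe_omegaO]; ring]
    linear_combination h1

lemma coe_three : ((3:OK):ℂ) = 3 := by norm_cast
lemma coe_two : ((2:OK):ℂ) = 2 := by norm_cast

lemma d1 : (1 - ωO) ∣ (3:OK) :=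
  ⟨2 + ωO, coe_inj (by
    push_cast [coe_omegaO, coe_three, coe_two]
    linear_combination omega_sq_eq)⟩

lemma d2 : (1 - ωO^2) ∣ (3:OK) :=
  ⟨1 - ωO, coe_inj (by
    push_cast [coe_omegaO, coe_three, coe_two]
    linear_combination omega_sq_eq - omega_pow_three)⟩

lemma d3 : (ωO - ωO^2) ∣ (3:OK) :=
  ⟨-(1 + 2*ωO), coe_inj (by
    push_cast [coe_omegaO, coe_three, coe_two]
    linear_combination omega_sq_eq - 2 * omega_pow_three)⟩

lemma dvd_swap {a b : OK} (h : a - b ∣ (3:OK)) : b - a ∣ (3:OK) := by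
  rw [← neg_sub]
  exact (neg_dvd).2 h

lemma cube_root_diff_dvd {ζ₁ ζ₂ : OK} (h1 : ζ₁ ^ 3 = 1) (h2 : ζ₂ ^ 3 = 1) (hne : ζ₁ ≠ ζ₂) :
    ζ₁ - ζ₂ ∣ 3 := by
  rcases cube_root_cases h1 with rfl | rfl | rfl <;>
    rcases cube_root_cases h2 with rfl | rfl | rfl
  · exact absurd rfl hne
  · exact d1
  · exact d2
  · exact dvd_swap d1
  · exact absurd rfl hne
  · exact d3
  · exact dvd_swap d2
  · exact dvd_swap d3
  · exact absurd rfl hne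

lemma cubicCharP_congr {p : OK} (hp : Prime p) (h3 : ¬ p ∣ 3) {x y : OK}
    (hxy : p ∣ x - y) (hx : ¬ p ∣ x) : cubicCharP p x = cubicCharP p y := by
  have hy : ¬ p ∣ y := fun h => hx (by
    have : x = (x - y) + y := by ring
    rw [this]; exact dvd_add hxy h)
  set M := (Nm p - 1) / 3 with hM
  have hpow : p ∣ x ^ M - y ^ M := hxy.trans (sub_dvd_pow_sub_pow x y M)
  have transfer : ∀ {u v : OK}, p ∣ u ^ M - v ^ M → ¬ p ∣ v →
      (∃ ζ : OK, ζ ^ 3 = 1 ∧ p ∣ ζ - u ^ M ∧ ¬ p ∣ u) →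
      (∃ ζ : OK, ζ ^ 3 = 1 ∧ p ∣ ζ - v ^ M ∧ ¬ p ∣ v) := by
    rintro u v huv hv ⟨ζ, hζ3, hζd, hu⟩
    refine ⟨ζ, hζ3, ?_, hv⟩
    have : ζ - v ^ M = (ζ - u ^ M) + (u ^ M - v ^ M) := by ring
    rw [this]
    exact dvd_add hζd huv
  unfold cubicCharP
  by_cases hex : ∃ ζ : OK, ζ ^ 3 = 1 ∧ p ∣ ζ - x ^ M ∧ ¬ p ∣ x
  · have hey : ∃ ζ : OK, ζ ^ 3 = 1 ∧ p ∣ ζ - y ^ M ∧ ¬ p ∣ y := transfer hpow hy hex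
    rw [dif_pos hex, dif_pos hey]
    obtain ⟨hx3, hxd, -⟩ := hex.choose_spec
    obtain ⟨hy3, hyd, -⟩ := hey.choose_spec
    by_contra hne
    have hdd : p ∣ hex.choose - hey.choose := by
      have : hex.choose - hey.choose =
          (hex.choose - x ^ M) - (hey.choose - y ^ M) - (y ^ M - x ^ M) := by ring
      rw [this]
      exact dvd_sub (dvd_sub hxd hyd) ((dvd_sub_comm.1 hpow))
    exact h3 (hdd.trans (cube_root_diff_dvd hx3 hy3 hne))
  · have hey : ¬ ∃ ζ : OK, ζ ^ 3 = 1 ∧ p ∣ ζ - y ^ M ∧ ¬ p ∣ y := by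
      intro hey
      exact hex (transfer (dvd_sub_comm.1 hpow) hx hey)
    rw [dif_neg hex, dif_neg hey]


-- new
lemma mk_eq_of_dvd {c x y : OK} (h : c ∣ x - y) :
    Ideal.Quotient.mk (Ideal.span {c}) x = Ideal.Quotient.mk (Ideal.span {c}) y :=
  Ideal.Quotient.eq.2 (Ideal.mem_span_singleton.2 h)

def epsUnit (p s : OK) (m : ℕ) : (OK ⧸ Ideal.span {p^(m+2)})ˣ :=
  Units.mkOfMulEqOne (Ideal.Quotient.mk _ (1 + p^(m+1)*s))
    (Ideal.Quotient.mk _ (1 - p^(m+1)*s + p^(m+1)*s*(p^(m+1)*s))) (by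
      rw [← map_mul]
      have : (1 + p^(m+1)*s) * (1 - p^(m+1)*s + p^(m+1)*s*(p^(m+1)*s)) - 1
          = p^(m+2) * (p^(2*m+1) * s^3) := by ring
      calc Ideal.Quotient.mk (Ideal.span {p^(m+2)})
            ((1 + p^(m+1)*s) * (1 - p^(m+1)*s + p^(m+1)*s*(p^(m+1)*s)))
          = Ideal.Quotient.mk (Ideal.span {p^(m+2)}) 1 :=
            mk_eq_of_dvd ⟨p^(2*m+1) * s^3, this⟩
        _ = 1 := map_one _)

lemma epsUnit_val (p s : OK) (m : ℕ) :
    (epsUnit p s m).val = Ideal.Quotient.mk _ (1 + p^(m+1)*s) := rfl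

lemma epsUnit_inv (p s : OK) (m : ℕ) :
    (↑(epsUnit p s m)⁻¹ : OK ⧸ Ideal.span {p^(m+2)})
      = Ideal.Quotient.mk _ (1 - p^(m+1)*s + p^(m+1)*s*(p^(m+1)*s)) := rfl

lemma expr_congr {c A W pB x y : OK} (h : c ∣ x - y) :
    c ∣ (A*W^2*x^3 + pB*x) - (A*W^2*y^3 + pB*y) := by
  obtain ⟨d, hd⟩ := h
  exact ⟨A*W^2*((x^2+x*y+y^2)*d) + pB*d,
    by linear_combination (A*W^2*(x^2+x*y+y^2) + pB) * hd⟩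

lemma dvd_cubic_iff {p : OK} (hp : Prime p) (h3 : ¬ p ∣ 3) {A w x : OK}
    (hA : ¬ p ∣ A) (hw : ¬ p ∣ w) : p ∣ 3*A*w^2*x^3 ↔ p ∣ x := by
  constructor
  · intro h
    rcases (hp.dvd_mul).1 h with h1 | h1
    · rcases (hp.dvd_mul).1 h1 with h2 | h2
      · rcases (hp.dvd_mul).1 h2 with h4 | h4
        · exact absurd h4 h3
        · exact absurd h4 hA
      · exact absurd (hp.dvd_of_dvd_pow h2) hw
    · exact hp.dvd_of_dvd_pow h1
  · intro h
    exact Dvd.dvd.mul_left (h.trans (dvd_pow_self x (by norm_num : (3:ℕ) ≠ 0))) _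

lemma step1 {p : OK} (hp : Prime p) (h3 : ¬ p ∣ 3) (A w B : OK) (hA : ¬ p ∣ A) (hw : ¬ p ∣ w)
    (m i : ℕ) [Fintype (OK ⧸ Ideal.span {p^(m+2)})] [Fintype (OK ⧸ Ideal.span {p})] :
    ∑ t : OK ⧸ Ideal.span {p^(m+2)}, E (p^(m+2)) (A * w^2 * rep t^3 + p^(i+1) * B * rep t)
    = ∑ t : OK ⧸ Ideal.span {p^(m+2)},
        if p ∣ rep t then E (p^(m+2)) (A * w^2 * rep t^3 + p^(i+1) * B * rep t) else 0 := by
  have hp0 : p ≠ 0 := hp.ne_zero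
  have hc0 : p^(m+2) ≠ 0 := pow_ne_zero _ hp0
  set F : (OK ⧸ Ideal.span {p^(m+2)}) → ℂ :=
    fun t => E (p^(m+2)) (A * w^2 * rep t^3 + p^(i+1) * B * rep t) with hF
  have key : ∀ s : OK, ∑ t, F t = ∑ t, F t * E p (3*A*w^2*rep t^3 * s) := by
    intro s
    have reindex : ∑ t, F ((Units.mulLeft (epsUnit p s m)) t) = ∑ t, F t :=
      Equiv.sum_comp (Units.mulLeft (epsUnit p s m)) F
    rw [← reindex]
    apply Finset.sum_congr rfl
    intro t _
    have hmul : ((Units.mulLeft (epsUnit p s m)) t : OK ⧸ Ideal.span {p^(m+2)})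
        = Ideal.Quotient.mk _ ((1 + p^(m+1)*s) * rep t) := by
      show (epsUnit p s m).val * t = _
      rw [epsUnit_val, map_mul, mk_rep]
    have hcong : p^(m+2) ∣ rep ((Units.mulLeft (epsUnit p s m)) t) - (1 + p^(m+1)*s) * rep t :=
      dvd_of_mk_eq (by rw [mk_rep, hmul])
    have hdecomp : A * w^2 * ((1 + p^(m+1)*s) * rep t)^3 + p^(i+1) * B * ((1 + p^(m+1)*s) * rep t)
        = (A * w^2 * rep t^3 + p^(i+1) * B * rep t) + (3*A*w^2*rep t^3 * s) * p^(m+1)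
          + p^(m+2) * (A*w^2*rep t^3*(3*p^m*s^2 + p^(2*m+1)*s^3) + p^i*B*rep t*s) := by
      ring
    calc F ((Units.mulLeft (epsUnit p s m)) t)
        = E (p^(m+2)) (A * w^2 * ((1 + p^(m+1)*s) * rep t)^3
            + p^(i+1) * B * ((1 + p^(m+1)*s) * rep t)) := E_congr hc0 (expr_congr hcong)
      _ = E (p^(m+2)) ((A * w^2 * rep t^3 + p^(i+1) * B * rep t)
            + (3*A*w^2*rep t^3 * s) * p^(m+1)
            + p^(m+2) * (A*w^2*rep t^3*(3*p^m*s^2 + p^(2*m+1)*s^3) + p^i*B*rep t*s)) := by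
          rw [hdecomp]
      _ = F t * E (p^(m+2)) ((3*A*w^2*rep t^3 * s) * p^(m+1))
            * E (p^(m+2)) (p^(m+2) * (A*w^2*rep t^3*(3*p^m*s^2 + p^(2*m+1)*s^3) + p^i*B*rep t*s)) := by
          rw [E_add, E_add]
      _ = F t * E p (3*A*w^2*rep t^3 * s) := by
          rw [E_shift hp0, E_dvd hc0 (Dvd.intro _ rfl), mul_one]
  have hcard : ((Fintype.card (OK ⧸ Ideal.span {p}) : ℂ)) ≠ 0 :=
    Nat.cast_ne_zero.2 Fintype.card_ne_zero
  apply mul_left_cancel₀ hcard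
  calc (Fintype.card (OK ⧸ Ideal.span {p}) : ℂ) * ∑ t, F t
      = ∑ q : OK ⧸ Ideal.span {p}, ∑ t, F t := by
        rw [Finset.sum_const, Finset.card_univ, nsmul_eq_mul]
    _ = ∑ q : OK ⧸ Ideal.span {p}, ∑ t, F t * E p (3*A*w^2*rep t^3 * rep q) := by
        exact Finset.sum_congr rfl (fun q _ => key (rep q))
    _ = ∑ t, ∑ q : OK ⧸ Ideal.span {p}, F t * E p (3*A*w^2*rep t^3 * rep q) :=
        Finset.sum_comm
    _ = ∑ t, F t * ∑ q : OK ⧸ Ideal.span {p}, E p (3*A*w^2*rep t^3 * rep q) := by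
        simp [Finset.mul_sum]
    _ = ∑ t, F t * (if p ∣ rep t then (Fintype.card (OK ⧸ Ideal.span {p}) : ℂ) else 0) := by
        apply Finset.sum_congr rfl
        intro t _
        by_cases hd : p ∣ rep t
        · rw [if_pos hd, char_sum_dvd hp0 ((dvd_cubic_iff hp h3 hA hw).2 hd)]
        · rw [if_neg hd, char_sum_zero hp0 (fun hc => hd ((dvd_cubic_iff hp h3 hA hw).1 hc))]
    _ = (Fintype.card (OK ⧸ Ideal.span {p}) : ℂ) * ∑ t, (if p ∣ rep t then F t else 0) := by
        rw [Finset.mul_sum]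
        apply Finset.sum_congr rfl
        intro t _
        by_cases hd : p ∣ rep t <;> simp [hd] <;> ring


lemma not_dvd_of_isUnit_mk {p : OK} (hp : Prime p) (m : ℕ) {x : OK}
    (h : IsUnit (Ideal.Quotient.mk (Ideal.span {p^(m+2)}) x)) : ¬ p ∣ x := by
  intro hdvd
  obtain ⟨u, hu⟩ := h
  obtain ⟨z, hz⟩ := Ideal.Quotient.mk_surjective ((u⁻¹ : _ˣ) : OK ⧸ Ideal.span {p^(m+2)})
  have h1 : Ideal.Quotient.mk (Ideal.span {p^(m+2)}) (x * z)
      = Ideal.Quotient.mk (Ideal.span {p^(m+2)}) 1 := by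
    rw [map_mul, hz, ← hu, map_one]
    exact u.mul_inv
  have h2 : p ∣ x * z - 1 := (dvd_pow_self p (Nat.succ_ne_zero (m+1))).trans (dvd_of_mk_eq h1)
  have h3 : p ∣ (1 : OK) := by
    have e : (1:OK) = x * z - (x * z - 1) := by ring
    rw [e]
    exact dvd_sub (hdvd.mul_right z) h2
  exact hp.not_unit (isUnit_of_dvd_one h3)

lemma not_dvd_rep_unit {p : OK} (hp : Prime p) (m : ℕ)
    (u : (OK ⧸ Ideal.span {p^(m+2)})ˣ) : ¬ p ∣ rep u.val := by
  apply not_dvd_of_isUnit_mk hp m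
  rw [mk_rep]
  exact u.isUnit

lemma isUnit_mk_of_coprime {p x : OK} (hco : IsCoprime x p) (n : ℕ) :
    IsUnit (Ideal.Quotient.mk (Ideal.span {p^n}) x) := by
  obtain ⟨a, c, hab⟩ := hco.pow_right (n := n)
  apply IsUnit.of_mul_eq_one (Ideal.Quotient.mk (Ideal.span {p^n}) a)
  rw [← map_mul, ← map_one (Ideal.Quotient.mk (Ideal.span {p^n}))]
  apply mk_eq_of_dvd
  exact ⟨-c, by linear_combination hab⟩

lemma isUnit_mk_w_rep {p w : OK} (hw : IsCoprime w p) (m : ℕ)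
    (u : (OK ⧸ Ideal.span {p^(m+2)})ˣ) :
    IsUnit (Ideal.Quotient.mk (Ideal.span {p^(m+2)}) (w * rep u.val)) := by
  rw [map_mul, mk_rep]
  exact (isUnit_mk_of_coprime hw (m+2)).mul u.isUnit

lemma invMod_mul_cancel {p w : OK} (hw : IsCoprime w p) (m : ℕ)
    (u : (OK ⧸ Ideal.span {p^(m+2)})ˣ) :
    Ideal.Quotient.mk (Ideal.span {p^(m+2)}) (invMod (p^(m+2)) (w * rep u.val))
      * Ideal.Quotient.mk (Ideal.span {p^(m+2)}) (w * rep u.val) = 1 := by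
  show Ideal.Quotient.mk (Ideal.span {p^(m+2)})
      (rep (Ring.inverse (Ideal.Quotient.mk (Ideal.span {p^(m+2)}) (w * rep u.val)))) * _ = 1
  rw [mk_rep]
  exact Ring.inverse_mul_cancel _ (isUnit_mk_w_rep hw m u)

lemma isUnit_mk_invMod {p w : OK} (hw : IsCoprime w p) (m : ℕ)
    (u : (OK ⧸ Ideal.span {p^(m+2)})ˣ) :
    IsUnit (Ideal.Quotient.mk (Ideal.span {p^(m+2)}) (invMod (p^(m+2)) (w * rep u.val))) :=
  IsUnit.of_mul_eq_one _ (invMod_mul_cancel hw m u)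

lemma inv_unique_q {p : OK} {m : ℕ} (x y z : OK ⧸ Ideal.span {p^(m+2)})
    (hx : x * z = 1) (hy : y * z = 1) : x = y := by
  calc x = x * (y * z) := by rw [hy, mul_one]
    _ = y * (x * z) := by ring
    _ = y := by rw [hx, mul_one]

/-- the ψ-factor shift -/
lemma psi_shift {p w : OK} (hp : Prime p) (hw : IsCoprime w p) (b s : OK) (m : ℕ)
    (u : (OK ⧸ Ideal.span {p^(m+2)})ˣ) :
    E (p^(m+2)) (b * invMod (p^(m+2)) (w * rep ((u * epsUnit p s m).val)))
      = E (p^(m+2)) (b * invMod (p^(m+2)) (w * rep u.val))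
        * E p (-(b * invMod (p^(m+2)) (w * rep u.val)) * s) := by
  have hc0 : p^(m+2) ≠ 0 := pow_ne_zero _ hp.ne_zero
  set ι₁ : OK := invMod (p^(m+2)) (w * rep ((u * epsUnit p s m).val)) with hι₁
  set ι₀ : OK := invMod (p^(m+2)) (w * rep u.val) with hι₀
  set e₂ : OK := 1 - p^(m+1)*s + p^(m+1)*s*(p^(m+1)*s) with he₂
  -- both ι₁ and ι₀ * e₂ are inverses of w * rep ((u·ε).val) mod p^(m+2)
  have hz1 : Ideal.Quotient.mk (Ideal.span {p^(m+2)}) ι₁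
      * Ideal.Quotient.mk (Ideal.span {p^(m+2)}) (w * rep ((u * epsUnit p s m).val)) = 1 :=
    invMod_mul_cancel hw m (u * epsUnit p s m)
  have hz2 : Ideal.Quotient.mk (Ideal.span {p^(m+2)}) (ι₀ * e₂)
      * Ideal.Quotient.mk (Ideal.span {p^(m+2)}) (w * rep ((u * epsUnit p s m).val)) = 1 := by
    have expand : Ideal.Quotient.mk (Ideal.span {p^(m+2)}) (ι₀ * e₂)
        * Ideal.Quotient.mk (Ideal.span {p^(m+2)}) (w * rep ((u * epsUnit p s m).val))
        = (Ideal.Quotient.mk (Ideal.span {p^(m+2)}) ι₀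
            * Ideal.Quotient.mk (Ideal.span {p^(m+2)}) (w * rep u.val))
          * (Ideal.Quotient.mk (Ideal.span {p^(m+2)}) e₂ * (epsUnit p s m).val) := by
      rw [map_mul, map_mul, mk_rep, map_mul, mk_rep, Units.val_mul]
      ring
    rw [expand, invMod_mul_cancel hw m u]
    have : Ideal.Quotient.mk (Ideal.span {p^(m+2)}) e₂ * (epsUnit p s m).val = 1 := by
      rw [he₂, show Ideal.Quotient.mk (Ideal.span {p^(m+2)})
          (1 - p^(m+1)*s + p^(m+1)*s*(p^(m+1)*s)) = ((epsUnit p s m)⁻¹ : _ˣ) from rfl]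
      exact (epsUnit p s m).inv_mul
    rw [this, one_mul]
  have hmkeq : Ideal.Quotient.mk (Ideal.span {p^(m+2)}) ι₁
      = Ideal.Quotient.mk (Ideal.span {p^(m+2)}) (ι₀ * e₂) := inv_unique_q _ _ _ hz1 hz2
  obtain ⟨d2, hd2⟩ := dvd_of_mk_eq (show Ideal.Quotient.mk (Ideal.span {p^(m+2)}) (b * ι₁)
      = Ideal.Quotient.mk (Ideal.span {p^(m+2)}) (b * (ι₀ * e₂)) by
    rw [map_mul, map_mul, hmkeq])
  have hdecomp : b * (ι₀ * e₂)
      = b * ι₀ + (-(b * ι₀) * s) * p^(m+1) + p^(m+2) * (b * ι₀ * s^2 * p^m) := by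
    rw [he₂]; ring
  calc E (p^(m+2)) (b * ι₁)
      = E (p^(m+2)) (b * (ι₀ * e₂)) := E_congr hc0 ⟨d2, hd2⟩
    _ = E (p^(m+2)) (b * ι₀ + (-(b * ι₀) * s) * p^(m+1)
          + p^(m+2) * (b * ι₀ * s^2 * p^m)) := by rw [hdecomp]
    _ = E (p^(m+2)) (b * ι₀) * E (p^(m+2)) ((-(b * ι₀) * s) * p^(m+1))
          * E (p^(m+2)) (p^(m+2) * (b * ι₀ * s^2 * p^m)) := by rw [E_add, E_add]
    _ = E (p^(m+2)) (b * ι₀) * E p (-(b * ι₀) * s) := by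
        rw [E_shift hp.ne_zero, E_dvd hc0 (Dvd.intro _ rfl), mul_one]

/- Statement 5 -/
theorem stmt5 (p w B b : OK) (hp : Prime p) (hp3 : (3 : OK) ∣ p - 1)
    (hco : IsCoprime (w * B * b) p) (j k : ℕ)
    (hjk : (1 ≤ j ∧ j < k) ∨ (1 < j ∧ j = k)) :
    ∑ᶠ u : (OK ⧸ Ideal.span {p ^ k})ˣ,
      ((cubicCharP p (rep u.val) ^ k : OK) : ℂ) *
        eC (((b * invMod (p ^ k) (w * rep u.val) : OK) : ℂ) / ((p ^ k : OK) : ℂ)) *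
        ∑ᶠ t : OK ⧸ Ideal.span {p ^ k},
          eC (((rep u.val * w ^ 2 * rep t ^ 3 + p ^ j * B * rep t : OK) : ℂ) /
            ((p ^ k : OK) : ℂ)) = 0 := by
  obtain ⟨m, rfl⟩ : ∃ m, k = m + 2 := ⟨k - 2, by omega⟩
  obtain ⟨i, rfl⟩ : ∃ i, j = i + 1 := ⟨j - 1, by omega⟩
  clear hjk
  have hp0 : p ≠ 0 := hp.ne_zero
  have hc0 : p ^ (m+2) ≠ 0 := pow_ne_zero _ hp0
  have h3 : ¬ p ∣ 3 := by
    intro h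
    have h1 : p ∣ p - 1 := h.trans hp3
    have h2 : p ∣ (1:OK) := by
      have e : (1:OK) = p - (p - 1) := by ring
      rw [e]
      exact dvd_sub dvd_rfl h1
    exact hp.not_unit (isUnit_of_dvd_one h2)
  have hw : IsCoprime w p := (IsCoprime.of_mul_left_left hco).of_mul_left_left
  have hb : IsCoprime b p := IsCoprime.of_mul_left_right hco
  have hwnd : ¬ p ∣ w := fun h => hp.not_unit (hw.isUnit_of_dvd' h dvd_rfl)
  have hbnd : ¬ p ∣ b := fun h => hp.not_unit (hb.isUnit_of_dvd' h dvd_rfl)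
  haveI : Finite (OK ⧸ Ideal.span {p ^ (m+2)}) := finiteQuot _ hc0
  haveI : Finite (OK ⧸ Ideal.span {p}) := finiteQuot _ hp0
  haveI : Fintype (OK ⧸ Ideal.span {p ^ (m+2)}) := Fintype.ofFinite _
  haveI : Fintype (OK ⧸ Ideal.span {p}) := Fintype.ofFinite _
  rw [finsum_eq_sum_of_fintype]
  simp only [finsum_eq_sum_of_fintype]
  have hE : ∀ x : OK, eC ((x:ℂ) / ((p^(m+2) : OK):ℂ)) = E (p^(m+2)) x := fun _ => rfl
  simp only [hE]
  have hstep1 : ∀ u : (OK ⧸ Ideal.span {p ^ (m+2)})ˣ,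
      (∑ t : OK ⧸ Ideal.span {p^(m+2)},
        E (p^(m+2)) (rep u.val * w^2 * rep t^3 + p^(i+1) * B * rep t))
      = ∑ t : OK ⧸ Ideal.span {p^(m+2)},
          if p ∣ rep t then E (p^(m+2)) (rep u.val * w^2 * rep t^3 + p^(i+1) * B * rep t)
          else 0 :=
    fun u => step1 hp h3 (rep u.val) w B (not_dvd_rep_unit hp m u) hwnd m i
  simp only [hstep1]
  set G : (OK ⧸ Ideal.span {p ^ (m+2)})ˣ → ℂ := fun u =>
    ((cubicCharP p (rep u.val) ^ (m+2) : OK) : ℂ) *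
      E (p^(m+2)) (b * invMod (p ^ (m+2)) (w * rep u.val)) *
      ∑ t : OK ⧸ Ideal.span {p^(m+2)},
        if p ∣ rep t then E (p^(m+2)) (rep u.val * w^2 * rep t^3 + p^(i+1) * B * rep t) else 0
    with hG
  show ∑ u, G u = 0
  have hbind : ∀ u : (OK ⧸ Ideal.span {p ^ (m+2)})ˣ,
      ¬ p ∣ -(b * invMod (p ^ (m+2)) (w * rep u.val)) := by
    intro u h
    rcases hp.dvd_mul.1 (dvd_neg.1 h) with h | h
    · exact hbnd h
    · exact not_dvd_of_isUnit_mk hp m (isUnit_mk_invMod hw m u) h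
  have keyq : ∀ s : OK, ∑ u, G u
      = ∑ u, G u * E p (-(b * invMod (p ^ (m+2)) (w * rep u.val)) * s) := by
    intro s
    have reindex : ∑ u, G ((Equiv.mulRight (epsUnit p s m)) u) = ∑ u, G u :=
      Equiv.sum_comp (Equiv.mulRight (epsUnit p s m)) G
    rw [← reindex]
    apply Finset.sum_congr rfl
    intro u _
    have hmulval : (Equiv.mulRight (epsUnit p s m)) u = u * epsUnit p s m :=
      rfl
    rw [hmulval]
    -- congruence for rep of the shifted unit
    have hmk : Ideal.Quotient.mk (Ideal.span {p^(m+2)}) (rep ((u * epsUnit p s m).val))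
        = Ideal.Quotient.mk (Ideal.span {p^(m+2)}) (rep u.val * (1 + p^(m+1)*s)) := by
      rw [mk_rep, map_mul, mk_rep, Units.val_mul]
      rfl
    obtain ⟨d, hd⟩ := dvd_of_mk_eq hmk
    -- (χ) factor
    have hχ : cubicCharP p (rep ((u * epsUnit p s m).val)) = cubicCharP p (rep u.val) := by
      apply cubicCharP_congr hp h3
      · exact ⟨p^(m+1) * d + rep u.val * p^m * s, by linear_combination hd⟩
      · exact not_dvd_rep_unit hp m (u * epsUnit p s m)
    -- (T) factor
    have hT : (∑ t : OK ⧸ Ideal.span {p^(m+2)},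
          if p ∣ rep t then
            E (p^(m+2)) (rep ((u * epsUnit p s m).val) * w^2 * rep t^3 + p^(i+1) * B * rep t)
          else 0)
        = ∑ t : OK ⧸ Ideal.span {p^(m+2)},
            if p ∣ rep t then
              E (p^(m+2)) (rep u.val * w^2 * rep t^3 + p^(i+1) * B * rep t) else 0 := by
      apply Finset.sum_congr rfl
      intro t _
      by_cases hdt : p ∣ rep t
      · rw [if_pos hdt, if_pos hdt]
        obtain ⟨y, hy⟩ := hdt
        apply E_congr hc0
        refine ⟨w^2 * (d * rep t^3 + rep u.val * s * p^2 * y^3), ?_⟩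
        linear_combination (w^2 * rep t^3) * hd
          + (rep u.val * p^(m+1) * s * w^2 * (rep t^2 + rep t * (p*y) + (p*y)^2)) * hy
      · rw [if_neg hdt, if_neg hdt]
    show G (u * epsUnit p s m) = G u * E p (-(b * invMod (p ^ (m+2)) (w * rep u.val)) * s)
    rw [hG]
    simp only
    rw [hχ, hT, psi_shift hp hw b s m u]
    ring
  have hcard : ((Fintype.card (OK ⧸ Ideal.span {p}) : ℂ)) ≠ 0 :=
    Nat.cast_ne_zero.2 Fintype.card_ne_zero
  apply mul_left_cancel₀ hcard
  rw [mul_zero]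
  calc (Fintype.card (OK ⧸ Ideal.span {p}) : ℂ) * ∑ u, G u
      = ∑ _q : OK ⧸ Ideal.span {p}, ∑ u, G u := by
        rw [Finset.sum_const, Finset.card_univ, nsmul_eq_mul]
    _ = ∑ q : OK ⧸ Ideal.span {p}, ∑ u, G u
          * E p (-(b * invMod (p ^ (m+2)) (w * rep u.val)) * rep q) :=
        Finset.sum_congr rfl (fun q _ => keyq (rep q))
    _ = ∑ u, ∑ q : OK ⧸ Ideal.span {p}, G u
          * E p (-(b * invMod (p ^ (m+2)) (w * rep u.val)) * rep q) :=
        Finset.sum_comm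
    _ = ∑ u, G u * ∑ q : OK ⧸ Ideal.span {p},
          E p (-(b * invMod (p ^ (m+2)) (w * rep u.val)) * rep q) := by
        simp [Finset.mul_sum]
    _ = 0 := by
        apply Finset.sum_eq_zero
        intro u _
        rw [char_sum_zero hp0 (hbind u), mul_zero]

end CubicSeries
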